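/- For an adapted integrable real price process λ_0,…,λ_{N−1}, Σ_{k=0}^{N−2} E[( E[λ_{k+1} | F_k] − λ_k )^+] ≤ (1/2)·E[TV(λ)] + (1/2)·E[λ_{N−1} − λ_0], where TV(λ) = Σ_{k=0}^{N−2} |λ_{k+1} − λ_k|. (The upper bound (12) of Theorem 2 on the locational marginal value of storage.) -/

import Mathlib

open MeasureTheory

/-- For an adapted integrable real price process `λ_0, …, λ_{N−1}`,
`∑_{k=0}^{N−2} E[(E[λ_{k+1} | F_k] − λ_k)⁺]
  ≤ (1/2)·E[TV(λ)] + (1/2)·E[λ_{N−1} − λ_0]`,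
where `TV(λ) = ∑_{k=0}^{N−2} |λ_{k+1} − λ_k|`. -/
theorem lmv_upper_bound {Ω : Type*} [m0 : MeasurableSpace Ω]
    (μ : Measure Ω) [IsProbabilityMeasure μ]
    (N : ℕ) (hN : 1 ≤ N) (F : Filtration ℕ m0)
    (lam : ℕ → Ω → ℝ)
    (hadapt : ∀ k, k < N → StronglyMeasurable[F k] (lam k))
    (hint : ∀ k, k < N → Integrable (lam k) μ) :
    ∑ k ∈ Finset.range (N - 1), ∫ ω, max ((μ[lam (k + 1)|F k]) ω - lam k ω) 0 ∂μ
      ≤ (1 / 2) * ∫ ω, ∑ k ∈ Finset.range (N - 1), |lam (k + 1) ω - lam k ω| ∂μ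
        + (1 / 2) * ∫ ω, (lam (N - 1) ω - lam 0 ω) ∂μ := by
  have hdiff : ∀ k, k < N - 1 → Integrable (fun ω => lam (k + 1) ω - lam k ω) μ := by
    intro k hk
    exact (hint (k + 1) (by omega)).sub (hint k (by omega))
  -- per-term bound
  have hterm : ∀ k ∈ Finset.range (N - 1),
      ∫ ω, max ((μ[lam (k + 1)|F k]) ω - lam k ω) 0 ∂μ
        ≤ (1 / 2) * ∫ ω, |lam (k + 1) ω - lam k ω| ∂μ
          + (1 / 2) * ((∫ ω, lam (k + 1) ω ∂μ) - ∫ ω, lam k ω ∂μ) := by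
    intro k hk
    rw [Finset.mem_range] at hk
    have hk1 : k + 1 < N := by omega
    have hkN : k < N := by omega
    have hle : F k ≤ m0 := F.le k
    have hYint : Integrable (μ[lam (k + 1)|F k]) μ := integrable_condExp
    have hki : Integrable (lam k) μ := hint k hkN
    have hk1i : Integrable (lam (k + 1)) μ := hint (k + 1) hk1
    -- Y - lam k =ᵐ μ[lam(k+1) - lam k | F k]
    have hcond : (fun ω => (μ[lam (k + 1)|F k]) ω - lam k ω)
        =ᵐ[μ] μ[fun ω => lam (k + 1) ω - lam k ω|F k] := by
      have heq : (fun ω => lam (k + 1) ω - lam k ω) = lam (k + 1) - lam k := rfl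
      rw [heq]
      have h1 := condExp_sub (m := F k) (μ := μ) hk1i hki
      have h2 : μ[lam k|F k] = lam k :=
        condExp_of_stronglyMeasurable hle (hadapt k hkN) hki
      filter_upwards [h1] with ω hω
      simp only [Pi.sub_apply] at hω ⊢
      rw [hω, h2]
    -- abs bound
    have habs : ∫ ω, |(μ[lam (k + 1)|F k]) ω - lam k ω| ∂μ
        ≤ ∫ ω, |lam (k + 1) ω - lam k ω| ∂μ := by
      calc ∫ ω, |(μ[lam (k + 1)|F k]) ω - lam k ω| ∂μ
          = ∫ ω, |(μ[fun ω => lam (k + 1) ω - lam k ω|F k]) ω| ∂μ := by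
            refine integral_congr_ae ?_
            filter_upwards [hcond] with ω hω
            rw [hω]
        _ ≤ ∫ ω, |lam (k + 1) ω - lam k ω| ∂μ :=
            integral_abs_condExp_le _
    have hmean : ∫ ω, ((μ[lam (k + 1)|F k]) ω - lam k ω) ∂μ
        = (∫ ω, lam (k + 1) ω ∂μ) - ∫ ω, lam k ω ∂μ := by
      rw [integral_sub hYint hki, integral_condExp hle]
    have hmax : (fun ω => max ((μ[lam (k + 1)|F k]) ω - lam k ω) 0)
        = fun ω => (1/2) * ((μ[lam (k + 1)|F k]) ω - lam k ω)
            + (1/2) * |(μ[lam (k + 1)|F k]) ω - lam k ω| := by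
      funext ω
      rw [max_def]
      rcases le_or_gt ((μ[lam (k + 1)|F k]) ω - lam k ω) 0 with h | h
      · rw [abs_of_nonpos h]; simp [h]; ring
      · rw [abs_of_pos h]; simp [not_le.mpr, h]; ring
    rw [hmax]
    have hsub : Integrable (fun ω => (μ[lam (k + 1)|F k]) ω - lam k ω) μ := hYint.sub hki
    rw [integral_add (hsub.const_mul _) (hsub.abs.const_mul _),
      integral_const_mul, integral_const_mul, hmean]
    linarith [habs]
  calc ∑ k ∈ Finset.range (N - 1), ∫ ω, max ((μ[lam (k + 1)|F k]) ω - lam k ω) 0 ∂μ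
      ≤ ∑ k ∈ Finset.range (N - 1), ((1 / 2) * ∫ ω, |lam (k + 1) ω - lam k ω| ∂μ
          + (1 / 2) * ((∫ ω, lam (k + 1) ω ∂μ) - ∫ ω, lam k ω ∂μ)) :=
        Finset.sum_le_sum hterm
    _ = (1 / 2) * ∑ k ∈ Finset.range (N - 1), (∫ ω, |lam (k + 1) ω - lam k ω| ∂μ)
          + (1 / 2) * ∑ k ∈ Finset.range (N - 1),
              ((∫ ω, lam (k + 1) ω ∂μ) - ∫ ω, lam k ω ∂μ) := by
        rw [Finset.sum_add_distrib, Finset.mul_sum, Finset.mul_sum]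
    _ = (1 / 2) * ∫ ω, ∑ k ∈ Finset.range (N - 1), |lam (k + 1) ω - lam k ω| ∂μ
        + (1 / 2) * ∫ ω, (lam (N - 1) ω - lam 0 ω) ∂μ := by
        congr 1
        · rw [integral_finset_sum]
          intro k hk
          rw [Finset.mem_range] at hk
          exact (hdiff k hk).abs
        · rw [Finset.sum_range_sub (fun n => ∫ ω, lam n ω ∂μ),
            integral_sub (hint (N - 1) (by omega)) (hint 0 (by omega))]
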